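/- arXiv:2403.14522 — 2 statements merged into one kernel-verified Lean document; each statement's English description precedes it below -/
import Mathlib

section
/- For n ≥ 2, E[X_n^n] − E[X_n^{n-1}] = n · E[X_n (X_n + 1)^{n-2}], where X_n is a Poisson random variable with parameter n. -/
/-- Probability that a Poisson random variable with parameter `l` equals `k`. -/
noncomputable def poissonPMF (l : ℝ) (k : ℕ) : ℝ :=
  Real.exp (-l) * l ^ k / (k.factorial : ℝ)

/-- Expectation of `f(X)` for `X` Poisson with parameter `l`. -/
noncomputable def poissonExp (l : ℝ) (f : ℕ → ℝ) : ℝ :=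
  ∑' k : ℕ, poissonPMF l k * f k

lemma poissonPMF_nonneg {l : ℝ} (hl : 0 ≤ l) (k : ℕ) : 0 ≤ poissonPMF l k := by
  unfold poissonPMF
  apply div_nonneg _ (by positivity)
  exact mul_nonneg (Real.exp_nonneg _) (pow_nonneg hl k)

lemma poisson_summable_aux (l : ℝ) (hl : 0 ≤ l) (m : ℕ) :
    Summable fun k : ℕ => poissonPMF l k * ((k : ℝ) + 1) ^ m := by
  have key : ∀ k : ℕ, poissonPMF l k * ((k : ℝ) + 1) ^ m
      ≤ (Real.exp (-l) * (m.factorial : ℝ) * Real.exp 1) * ((l * Real.exp 1) ^ k / k.factorial) := by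
    intro k
    have hpow : ((k : ℝ) + 1) ^ m ≤ (m.factorial : ℝ) * Real.exp ((k : ℝ) + 1) := by
      have := Real.pow_div_factorial_le_exp (x := (k : ℝ) + 1) (by positivity) m
      rw [div_le_iff₀ (by positivity)] at this
      linarith [this]
    have hexp : Real.exp ((k : ℝ) + 1) = Real.exp 1 ^ k * Real.exp 1 := by
      rw [← Real.exp_nat_mul, ← Real.exp_add]
      ring_nf
    unfold poissonPMF
    rw [div_mul_eq_mul_div, div_le_iff₀ (by positivity)]
    calc Real.exp (-l) * l ^ k * ((k : ℝ) + 1) ^ m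
        ≤ Real.exp (-l) * l ^ k * ((m.factorial : ℝ) * Real.exp ((k : ℝ) + 1)) := by
          apply mul_le_mul_of_nonneg_left hpow
          exact mul_nonneg (Real.exp_nonneg _) (pow_nonneg hl k)
      _ = Real.exp (-l) * (m.factorial : ℝ) * Real.exp 1 * ((l * Real.exp 1) ^ k / ↑k.factorial) * ↑k.factorial := by
          rw [hexp, mul_pow]
          field_simp
  apply Summable.of_nonneg_of_le (fun k => mul_nonneg (poissonPMF_nonneg hl k) (by positivity)) key
  exact ((Real.summable_pow_div_factorial (l * Real.exp 1)).mul_left _)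

lemma poisson_shift (l : ℝ) (f : ℕ → ℝ) :
    poissonExp l (fun k => (k : ℝ) * f k) = l * poissonExp l (fun k => f (k + 1)) := by
  unfold poissonExp
  rw [← tsum_mul_left]
  have := Function.Injective.tsum_eq (g := Nat.succ)
      (f := fun k : ℕ => poissonPMF l k * ((k : ℝ) * f k)) Nat.succ_injective ?_
  · rw [← this]
    apply tsum_congr
    intro k
    unfold poissonPMF
    have hk : ((k + 1).factorial : ℝ) = (k + 1) * k.factorial := by
      push_cast [Nat.factorial_succ]; ring
    simp only [Nat.succ_eq_add_one, hk]
    have h1 : ((k : ℝ) + 1) ≠ 0 := by positivity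
    have h2 : (k.factorial : ℝ) ≠ 0 := by positivity
    push_cast
    field_simp
    ring
  · intro x hx
    rcases x with _ | x
    · simp at hx
    · exact ⟨x, rfl⟩

/-- For `n ≥ 2` and `X_n` Poisson with parameter `n`,
`E[X_n^n] − E[X_n^{n-1}] = n·E[X_n (X_n + 1)^{n-2}]`. -/
theorem poisson_moment_difference (n : ℕ) (hn : 2 ≤ n) :
    poissonExp (n : ℝ) (fun k => (k : ℝ) ^ n)
        - poissonExp (n : ℝ) (fun k => (k : ℝ) ^ (n - 1))
      = (n : ℝ) * poissonExp (n : ℝ) (fun k => (k : ℝ) * ((k : ℝ) + 1) ^ (n - 2)) := by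
  obtain ⟨m, hm⟩ : ∃ m, n = m + 2 := ⟨n - 2, by omega⟩
  subst hm
  have h1 : m + 2 - 1 = m + 1 := rfl
  have h2 : m + 2 - 2 = m := rfl
  rw [h1, h2]
  have e1 : poissonExp ((m + 2 : ℕ) : ℝ) (fun k => (k : ℝ) ^ (m + 2))
      = ((m + 2 : ℕ) : ℝ) * poissonExp ((m + 2 : ℕ) : ℝ) (fun k => ((k : ℝ) + 1) ^ (m + 1)) := by
    rw [show (fun k : ℕ => (k : ℝ) ^ (m + 2)) = fun k : ℕ => (k : ℝ) * (k : ℝ) ^ (m + 1) from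
      funext fun k => by ring]
    rw [poisson_shift]
    congr 1
    apply congrArg
    funext k
    push_cast
    ring
  have e2 : poissonExp ((m + 2 : ℕ) : ℝ) (fun k => (k : ℝ) ^ (m + 1))
      = ((m + 2 : ℕ) : ℝ) * poissonExp ((m + 2 : ℕ) : ℝ) (fun k => ((k : ℝ) + 1) ^ m) := by
    rw [show (fun k : ℕ => (k : ℝ) ^ (m + 1)) = fun k : ℕ => (k : ℝ) * (k : ℝ) ^ m from
      funext fun k => by ring]
    rw [poisson_shift]
    congr 1
    apply congrArg
    funext k
    push_cast
    ring
  have e3 : poissonExp ((m + 2 : ℕ) : ℝ) (fun k => (k : ℝ) * ((k : ℝ) + 1) ^ m)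
      = poissonExp ((m + 2 : ℕ) : ℝ) (fun k => ((k : ℝ) + 1) ^ (m + 1))
        - poissonExp ((m + 2 : ℕ) : ℝ) (fun k => ((k : ℝ) + 1) ^ m) := by
    unfold poissonExp
    rw [← Summable.tsum_sub (poisson_summable_aux _ (by positivity) (m + 1))
      (poisson_summable_aux _ (by positivity) m)]
    apply tsum_congr
    intro k
    ring
  rw [e1, e2, e3]
  ring
end

section
/- Let H(z) = ∑_{n≥1} h_n z^n/n! be the exponential generating function for the number h_n of rooted spanning trees of the complete hypergraph on n labeled vertices. Then H(z) = z·exp(exp(H(z)) − 1) as formal power series. -/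
/-- Stirling numbers of the second kind. -/
def stirling2 : ℕ → ℕ → ℕ
  | 0, 0 => 1
  | 0, _ + 1 => 0
  | _ + 1, 0 => 0
  | n + 1, k + 1 => (k + 1) * stirling2 n (k + 1) + stirling2 n k

/-- Bell numbers: `B(k) = ∑_{i=0}^{k} S(k,i)`. -/
def bell (k : ℕ) : ℕ := ∑ i ∈ Finset.range (k + 1), stirling2 k i

/-- The composition `exp ∘ S` of a formal power series `S` with zero constant
term with the exponential series, given coefficientwise (for such `S`, only
the terms `S^k/k!` with `k ≤ n` contribute to the `n`-th coefficient). -/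
noncomputable def expComp (S : PowerSeries ℚ) : PowerSeries ℚ :=
  PowerSeries.mk fun n =>
    ∑ k ∈ Finset.range (n + 1), PowerSeries.coeff n (S ^ k) / (k.factorial : ℚ)

open Finset PowerSeries

lemma stirling2_zero_succ (k : ℕ) : stirling2 0 (k+1) = 0 := rfl
lemma stirling2_succ_zero (n : ℕ) : stirling2 (n+1) 0 = 0 := rfl
lemma stirling2_succ_succ (n k : ℕ) :
    stirling2 (n+1) (k+1) = (k + 1) * stirling2 n (k + 1) + stirling2 n k := rfl

lemma stirling2_eq_zero_of_lt : ∀ {j k : ℕ}, j < k → stirling2 j k = 0 := by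
  intro j
  induction j with
  | zero => intro k hk; obtain ⟨k', rfl⟩ := Nat.exists_eq_add_of_lt hk; rfl
  | succ n ih =>
    intro k hk
    obtain ⟨k', rfl⟩ : ∃ k', k = k' + 1 := ⟨k - 1, by omega⟩
    rw [stirling2_succ_succ, ih (by omega), ih (by omega)]
    ring

lemma stirling2_one (n : ℕ) : stirling2 (n+1) 1 = 1 := by
  induction n with
  | zero => rfl
  | succ n ih => rw [stirling2_succ_succ, ih]; rfl

lemma stirling2_succ_sum : ∀ n k : ℕ, stirling2 (n+1) (k+1) = ∑ j ∈ Finset.range (n+1), n.choose j * stirling2 j k := by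
  intro n
  induction n with
  | zero =>
    intro k
    cases k with
    | zero => rfl
    | succ k => simp [stirling2_succ_succ, stirling2_zero_succ]
  | succ n ih =>
    intro k
    cases k with
    | zero =>
      rw [stirling2_succ_succ, stirling2_one, stirling2_succ_zero, mul_one, add_zero]
      rw [Finset.sum_eq_single 0]
      · rfl
      · intro j _ hj
        obtain ⟨j', rfl⟩ : ∃ j', j = j' + 1 := ⟨j - 1, by omega⟩
        rw [stirling2_succ_zero, mul_zero]
      · intro habs; simp at habs
    | succ k =>
      have shift : ∑ i ∈ range (n+1), n.choose (i+1) * stirling2 (i+1) (k+1)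
          = ∑ i ∈ range (n+1), n.choose i * stirling2 i (k+1) := by
        have h1 := Finset.sum_range_succ' (fun i => n.choose i * stirling2 i (k+1)) (n+1)
        have h2 := Finset.sum_range_succ (fun i => n.choose i * stirling2 i (k+1)) (n+1)
        simp only [Nat.choose_succ_self, zero_mul, add_zero, Nat.choose_zero_right,
          stirling2_zero_succ, mul_zero] at h1 h2
        omega
      calc stirling2 (n+2) (k+2)
          = (k+2) * stirling2 (n+1) (k+2) + stirling2 (n+1) (k+1) := rfl
        _ = (k+2) * (∑ j ∈ range (n+1), n.choose j * stirling2 j (k+1))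
              + ∑ j ∈ range (n+1), n.choose j * stirling2 j k := by rw [ih (k+1), ih k]
        _ = ∑ j ∈ Finset.range (n+2), (n+1).choose j * stirling2 j (k+1) := by
            rw [Finset.sum_range_succ' (fun j => (n+1).choose j * stirling2 j (k+1)) (n+1)]
            simp only [stirling2_zero_succ, mul_zero, add_zero]
            have : ∀ i, (n+1).choose (i+1) * stirling2 (i+1) (k+1)
                = (k+1) * (n.choose i * stirling2 i (k+1)) + n.choose i * stirling2 i k
                  + n.choose (i+1) * stirling2 (i+1) (k+1) := by
              intro i
              rw [Nat.choose_succ_succ, add_mul, stirling2_succ_succ]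
              ring
            rw [Finset.sum_congr rfl (fun i _ => this i)]
            rw [Finset.sum_add_distrib, Finset.sum_add_distrib, shift, ← Finset.mul_sum]
            ring
lemma coeff_pow_eq_zero_of_lt {S : PowerSeries ℚ} (hS : constantCoeff S = 0) {j m : ℕ}
    (hm : m < j) : coeff m (S ^ j) = 0 := by
  have : (X : PowerSeries ℚ) ^ j ∣ S ^ j := pow_dvd_pow_of_dvd (X_dvd_iff.2 hS) j
  exact (X_pow_dvd_iff.1 this) m hm

lemma coeff_expComp {S : PowerSeries ℚ} (hS : constantCoeff S = 0) {m N : ℕ} (hmN : m ≤ N) :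
    coeff m (expComp S) = ∑ k ∈ range (N+1), coeff m (S^k) / (k.factorial : ℚ) := by
  rw [expComp, coeff_mk]
  refine Finset.sum_subset ?_ ?_
  · intro k hk; simp only [Finset.mem_range] at *; omega
  · intro k _ hk
    simp only [Finset.mem_range, not_lt] at hk
    rw [coeff_pow_eq_zero_of_lt hS (by omega), zero_div]

lemma constantCoeff_expComp_sub_one {S : PowerSeries ℚ} (hS : constantCoeff S = 0) :
    constantCoeff (expComp S - 1) = 0 := by
  have h1 : (constantCoeff) (expComp S) = 1 := by
    rw [← coeff_zero_eq_constantCoeff, expComp, coeff_mk]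
    simp
  rw [map_sub, h1, map_one, sub_self]

lemma antidiagonal_c_sum (k s : ℕ) :
    ∑ ij ∈ Finset.HasAntidiagonal.antidiagonal s,
        (k.factorial * stirling2 ij.1 k : ℚ) / (ij.1.factorial : ℚ) / (ij.2.factorial : ℚ)
      = (k.factorial * stirling2 s k : ℚ) / (s.factorial : ℚ)
        + ((k+1).factorial * stirling2 s (k+1) : ℚ) / (s.factorial : ℚ) := by
  rw [Finset.Nat.sum_antidiagonal_eq_sum_range_succ_mk]
  have key : ∀ j ∈ range (s+1),
      (k.factorial * stirling2 j k : ℚ) / (j.factorial : ℚ) / (((s-j).factorial : ℕ) : ℚ)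
        = ((s.choose j * (k.factorial * stirling2 j k) : ℕ) : ℚ) / (s.factorial : ℚ) := by
    intro j hj
    rw [Finset.mem_range] at hj
    have h1 : (j.factorial : ℚ) ≠ 0 := Nat.cast_ne_zero.2 (Nat.factorial_ne_zero _)
    have h2 : (((s-j).factorial : ℕ) : ℚ) ≠ 0 := Nat.cast_ne_zero.2 (Nat.factorial_ne_zero _)
    have h3 : ((s.factorial : ℕ) : ℚ) ≠ 0 := Nat.cast_ne_zero.2 (Nat.factorial_ne_zero _)
    have h4 : (s.choose j) * j.factorial * (s-j).factorial = s.factorial :=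
      Nat.choose_mul_factorial_mul_factorial (by omega)
    have h4' : ((s.choose j : ℚ)) * (j.factorial : ℚ) * (((s-j).factorial : ℕ) : ℚ)
        = (s.factorial : ℚ) := by exact_mod_cast congrArg (Nat.cast : ℕ → ℚ) h4
    rw [div_div, div_eq_div_iff (by positivity) h3]
    push_cast
    rw [← h4']
    ring
  rw [Finset.sum_congr rfl key, ← Finset.sum_div, ← Nat.cast_sum]
  have hnat : ∑ j ∈ range (s+1), s.choose j * (k.factorial * stirling2 j k)
      = k.factorial * ((k+1) * stirling2 s (k+1) + stirling2 s k) := by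
    rw [← stirling2_succ_succ, stirling2_succ_sum]
    rw [Finset.mul_sum]
    exact Finset.sum_congr rfl fun j _ => by ring
  rw [hnat]
  push_cast [Nat.factorial_succ]
  have h3 : ((s.factorial : ℕ) : ℚ) ≠ 0 := Nat.cast_ne_zero.2 (Nat.factorial_ne_zero _)
  field_simp
  ring

lemma triangle_sum (N : ℕ) (F : ℕ × ℕ → ℚ) :
    ∑ s ∈ range N, ∑ ij ∈ Finset.HasAntidiagonal.antidiagonal s, F ij
      = ∑ ij ∈ (range N ×ˢ range N).filter (fun ij => ij.1 + ij.2 < N), F ij := by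
  rw [← Finset.sum_biUnion]
  · congr 1
    ext ⟨i, j⟩
    simp only [Finset.mem_biUnion, Finset.mem_range, Finset.HasAntidiagonal.mem_antidiagonal,
      Finset.mem_filter, Finset.mem_product]
    constructor
    · rintro ⟨s, hs, rfl⟩; omega
    · intro h; exact ⟨i + j, by omega, rfl⟩
  · intro a ha b hb hab
    simp only [Function.onFun]
    rw [Finset.disjoint_left]
    intro ij hij hij'
    rw [Finset.HasAntidiagonal.mem_antidiagonal] at hij hij'
    exact hab (by rw [← hij, ← hij'])




lemma coeff_pow_expComp_sub_one {H : PowerSeries ℚ} (hH : constantCoeff H = 0) :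
    ∀ (k m : ℕ), coeff m ((expComp H - 1) ^ k)
      = ∑ j ∈ range (m+1),
          (k.factorial * stirling2 j k : ℚ) / (j.factorial : ℚ) * coeff m (H ^ j) := by
  intro k
  induction k with
  | zero =>
    intro m
    rw [pow_zero, Finset.sum_eq_single 0]
    · simp [show stirling2 0 0 = 1 from rfl]
    · intro j _ hj
      obtain ⟨j', rfl⟩ : ∃ j', j = j' + 1 := ⟨j - 1, by omega⟩
      rw [stirling2_succ_zero]
      simp
    · simp
  | succ k ih =>
    intro m
    have hG : constantCoeff (expComp H - 1) = 0 := constantCoeff_expComp_sub_one hH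
    have coeffGk : ∀ p, p ≤ m → coeff p ((expComp H - 1)^k)
        = ∑ i ∈ range (m+1),
            (k.factorial * stirling2 i k : ℚ) / (i.factorial : ℚ) * coeff p (H ^ i) := by
      intro p hp
      rw [ih p]
      refine Finset.sum_subset ?_ ?_
      · intro i hi; simp only [Finset.mem_range] at *; omega
      · intro i _ hi
        simp only [Finset.mem_range, not_lt] at hi
        rw [coeff_pow_eq_zero_of_lt hH (by omega), mul_zero]
    have coeffG : ∀ q, q ≤ m → coeff q (expComp H - 1)
        = (∑ j ∈ range (m+1), coeff q (H ^ j) / (j.factorial : ℚ))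
            - (if q = 0 then 1 else 0) := by
      intro q hq
      rw [map_sub, coeff_expComp hH hq, PowerSeries.coeff_one]
    rw [pow_succ, PowerSeries.coeff_mul]
    have expand : ∀ ij ∈ Finset.HasAntidiagonal.antidiagonal m,
        coeff ij.1 ((expComp H - 1) ^ k) * coeff ij.2 (expComp H - 1)
          = (∑ i ∈ range (m+1),
              (k.factorial * stirling2 i k : ℚ) / (i.factorial : ℚ) * coeff ij.1 (H ^ i))
            * ((∑ j ∈ range (m+1), coeff ij.2 (H ^ j) / (j.factorial : ℚ))
                - (if ij.2 = 0 then 1 else 0)) := by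
      intro ij hij
      rw [Finset.HasAntidiagonal.mem_antidiagonal] at hij
      rw [coeffGk ij.1 (by omega), coeffG ij.2 (by omega)]
    rw [Finset.sum_congr rfl expand]
    simp only [mul_sub, Finset.sum_sub_distrib]
    have part2 : ∑ ij ∈ Finset.HasAntidiagonal.antidiagonal m,
        (∑ i ∈ range (m+1),
          (k.factorial * stirling2 i k : ℚ) / (i.factorial : ℚ) * coeff ij.1 (H ^ i))
          * (if ij.2 = 0 then (1:ℚ) else 0)
        = coeff m ((expComp H - 1)^k) := by
      rw [Finset.sum_eq_single (m, 0)]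
      · rw [if_pos rfl, mul_one, ← ih m]
      · intro ij hij hne
        rw [Finset.HasAntidiagonal.mem_antidiagonal] at hij
        have : ij.2 ≠ 0 := by
          intro h0
          exact hne (by obtain ⟨a, b⟩ := ij; simp at h0 hij ⊢; omega)
        rw [if_neg this, mul_zero]
      · intro h; exact absurd (Finset.HasAntidiagonal.mem_antidiagonal.2 (by simp)) h
    rw [part2]
    have part1 : ∑ ij ∈ Finset.HasAntidiagonal.antidiagonal m,
        (∑ i ∈ range (m+1),
            (k.factorial * stirling2 i k : ℚ) / (i.factorial : ℚ) * coeff ij.1 (H ^ i))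
          * (∑ j ∈ range (m+1), coeff ij.2 (H ^ j) / (j.factorial : ℚ))
        = coeff m ((expComp H - 1)^k)
          + ∑ j ∈ range (m+1),
              ((k+1).factorial * stirling2 j (k+1) : ℚ) / (j.factorial : ℚ) * coeff m (H ^ j) := by
      have step1 : ∑ ij ∈ Finset.HasAntidiagonal.antidiagonal m,
          (∑ i ∈ range (m+1),
              (k.factorial * stirling2 i k : ℚ) / (i.factorial : ℚ) * coeff ij.1 (H ^ i))
            * (∑ j ∈ range (m+1), coeff ij.2 (H ^ j) / (j.factorial : ℚ))
          = ∑ i ∈ range (m+1), ∑ j ∈ range (m+1),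
              ((k.factorial * stirling2 i k : ℚ) / (i.factorial : ℚ) / (j.factorial : ℚ))
                * coeff m (H ^ (i + j)) := by
        rw [Finset.sum_congr rfl (fun ij _ => Finset.sum_mul_sum _ _ _ _)]
        rw [Finset.sum_comm]
        refine Finset.sum_congr rfl (fun i _ => ?_)
        rw [Finset.sum_comm]
        refine Finset.sum_congr rfl (fun j _ => ?_)
        rw [pow_add, PowerSeries.coeff_mul, Finset.mul_sum]
        refine Finset.sum_congr rfl (fun ij _ => ?_)
        ring
      rw [step1]
      rw [← Finset.sum_product']
      rw [← Finset.sum_filter_of_ne (p := fun ij : ℕ × ℕ => ij.1 + ij.2 < m + 1)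
        (by
          intro ij _ hne
          by_contra hgt
          exact hne (by rw [coeff_pow_eq_zero_of_lt hH (by omega), mul_zero]))]
      rw [← triangle_sum]
      have step2 : ∀ s ∈ range (m+1), ∑ ij ∈ Finset.HasAntidiagonal.antidiagonal s,
            ((k.factorial * stirling2 ij.1 k : ℚ) / (ij.1.factorial : ℚ) / (ij.2.factorial : ℚ))
              * coeff m (H ^ (ij.1 + ij.2))
          = (k.factorial * stirling2 s k : ℚ) / (s.factorial : ℚ) * coeff m (H ^ s)
            + ((k+1).factorial * stirling2 s (k+1) : ℚ) / (s.factorial : ℚ) * coeff m (H ^ s) := by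
        intro s _
        have e1 : ∀ ij ∈ Finset.HasAntidiagonal.antidiagonal s,
            (k.factorial * stirling2 ij.1 k : ℚ) / (ij.1.factorial : ℚ) / (ij.2.factorial : ℚ)
                * coeff m (H ^ (ij.1 + ij.2))
              = (k.factorial * stirling2 ij.1 k : ℚ) / (ij.1.factorial : ℚ) / (ij.2.factorial : ℚ)
                * coeff m (H ^ s) := by
          intro ij hij
          rw [Finset.HasAntidiagonal.mem_antidiagonal.1 hij]
        rw [Finset.sum_congr rfl e1, ← Finset.sum_mul, antidiagonal_c_sum, add_mul]
      rw [Finset.sum_congr rfl step2, Finset.sum_add_distrib, ← ih m]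
    rw [part1]
    ring



lemma bell_eq_sum {j N : ℕ} (hj : j ≤ N) : (bell j : ℕ) = ∑ k ∈ range (N+1), stirling2 j k := by
  rw [bell]
  refine Finset.sum_subset ?_ ?_
  · intro k hk; simp only [Finset.mem_range] at *; omega
  · intro k _ hk
    simp only [Finset.mem_range, not_lt] at hk
    exact stirling2_eq_zero_of_lt (by omega)

lemma coeff_expComp_expComp {H : PowerSeries ℚ} (hH : constantCoeff H = 0) (m : ℕ) :
    coeff m (expComp (expComp H - 1))
      = ∑ j ∈ range (m+1), (bell j : ℚ) / (j.factorial : ℚ) * coeff m (H ^ j) := by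
  rw [coeff_expComp (constantCoeff_expComp_sub_one hH) (le_refl m)]
  have e1 : ∀ k ∈ range (m+1),
      coeff m ((expComp H - 1) ^ k) / (k.factorial : ℚ)
        = ∑ j ∈ range (m+1),
            (stirling2 j k : ℚ) / (j.factorial : ℚ) * coeff m (H ^ j) := by
    intro k _
    rw [coeff_pow_expComp_sub_one hH k m, Finset.sum_div]
    refine Finset.sum_congr rfl (fun j _ => ?_)
    have hk : (k.factorial : ℚ) ≠ 0 := Nat.cast_ne_zero.2 (Nat.factorial_ne_zero _)
    field_simp
  rw [Finset.sum_congr rfl e1, Finset.sum_comm]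
  refine Finset.sum_congr rfl (fun j hj => ?_)
  rw [← Finset.sum_mul, ← Finset.sum_div, ← Nat.cast_sum,
    ← bell_eq_sum (Finset.mem_range.1 hj |> Nat.lt_succ_iff.1)]

lemma coeff_pow_tuple (φ : PowerSeries ℚ) (j m : ℕ) :
    coeff m (φ ^ j) = ∑ a ∈ Finset.Nat.antidiagonalTuple j m, ∏ i, coeff (a i) φ := by
  have hprod : φ ^ j = ∏ _i ∈ (Finset.univ : Finset (Fin j)), φ := by
    rw [Finset.prod_const, Finset.card_univ, Fintype.card_fin]
  rw [hprod, PowerSeries.coeff_prod]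
  refine Finset.sum_nbij' (fun l => (l : Fin j → ℕ))
    (fun a => Finsupp.equivFunOnFinite.symm a) ?_ ?_ ?_ ?_ ?_
  · intro l hl
    rw [Finset.mem_finsuppAntidiag] at hl
    rw [Finset.Nat.mem_antidiagonalTuple]
    exact hl.1
  · intro a ha
    rw [Finset.Nat.mem_antidiagonalTuple] at ha
    rw [Finset.mem_finsuppAntidiag]
    constructor
    · rw [← ha]
      exact Finset.sum_congr rfl (fun i _ => rfl)
    · exact Finset.subset_univ _
  · intro l _
    exact Finsupp.equivFunOnFinite.symm_apply_apply l
  · intro a _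
    exact Finsupp.equivFunOnFinite.apply_symm_apply a
  · intro l _
    exact Finset.prod_congr rfl (fun i _ => rfl)

lemma coeff_H_pow (h : ℕ → ℚ) {m : ℕ} (hm : 0 < m) (j : ℕ) :
    PowerSeries.coeff m ((PowerSeries.mk fun i => if i = 0 then 0 else h i / (i.factorial : ℚ)) ^ j)
      = (∑ a ∈ (Finset.Nat.antidiagonalTuple j m).filter (fun a => ∀ i, 0 < a i),
          (Nat.multinomial Finset.univ a : ℚ) * ∏ i, h (a i)) / (m.factorial : ℚ) := by
  rw [coeff_pow_tuple]
  rw [← Finset.sum_filter_of_ne (p := fun a : Fin j → ℕ => ∀ i, 0 < a i)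
    (by
      intro a _ hne i
      by_contra hzero
      refine hne (Finset.prod_eq_zero (Finset.mem_univ i) ?_)
      rw [PowerSeries.coeff_mk, if_pos (by omega)])]
  rw [Finset.sum_div]
  refine Finset.sum_congr rfl (fun a ha => ?_)
  rw [Finset.mem_filter] at ha
  obtain ⟨hamem, hapos⟩ := ha
  rw [Finset.Nat.mem_antidiagonalTuple] at hamem
  have e1 : ∀ i ∈ (Finset.univ : Finset (Fin j)),
      PowerSeries.coeff (a i) (PowerSeries.mk fun i => if i = 0 then 0 else h i / (i.factorial : ℚ))
        = h (a i) / (((a i).factorial : ℕ) : ℚ) := by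
    intro i _
    rw [PowerSeries.coeff_mk, if_neg (Nat.pos_iff_ne_zero.1 (hapos i))]
  rw [Finset.prod_congr rfl e1, Finset.prod_div_distrib]
  have hspec : (∏ i, ((a i).factorial)) * Nat.multinomial Finset.univ a = m.factorial := by
    rw [Nat.multinomial_spec, hamem]
  have hq : ((∏ i, ((a i).factorial) : ℕ) : ℚ) * (Nat.multinomial Finset.univ a : ℚ)
      = ((m.factorial : ℕ) : ℚ) := by exact_mod_cast congrArg (Nat.cast : ℕ → ℚ) hspec
  have h1 : ((∏ i, ((a i).factorial) : ℕ) : ℚ) ≠ 0 :=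
    Nat.cast_ne_zero.2 (Finset.prod_ne_zero_iff.2 fun i _ => Nat.factorial_ne_zero _)
  have h2 : ((m.factorial : ℕ) : ℚ) ≠ 0 := Nat.cast_ne_zero.2 (Nat.factorial_ne_zero _)
  rw [div_eq_div_iff (by push_cast at h1 ⊢; exact h1) h2]
  push_cast at hq ⊢
  rw [← hq]
  ring

/-- Let `h n` count rooted spanning trees of the complete hypergraph on `n`
labeled vertices, i.e. `h 1 = 1` and for `n > 1`,
`h n = n·∑_{k>0} (B(k)/k!)·∑_{a_1+⋯+a_k = n-1, a_j>0} multinomial(n-1; a)·∏ h(a_j)`.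
Then the exponential generating function `H(z) = ∑_{n≥1} h_n z^n/n!` satisfies
`H(z) = z·exp(exp(H(z)) − 1)` as formal power series. -/
theorem hypertree_egf_equation (h : ℕ → ℚ)
    (h1 : h 1 = 1)
    (hrec : ∀ n : ℕ, 1 < n →
      h n = (n : ℚ) * ∑ k ∈ Finset.Icc 1 (n - 1),
        ((bell k : ℚ) / (k.factorial : ℚ)) *
          ∑ a ∈ (Finset.Nat.antidiagonalTuple k (n - 1)).filter
              (fun a => ∀ j, 0 < a j),
            (Nat.multinomial Finset.univ a : ℚ) * ∏ j, h (a j)) :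
    (PowerSeries.mk fun m => if m = 0 then 0 else h m / (m.factorial : ℚ))
      = PowerSeries.X *
          expComp (expComp
            (PowerSeries.mk fun m => if m = 0 then 0 else h m / (m.factorial : ℚ)) - 1) := by
  have hH : PowerSeries.constantCoeff
      (PowerSeries.mk fun m => if m = 0 then 0 else h m / (m.factorial : ℚ)) = 0 := by
    rw [PowerSeries.constantCoeff_mk]; simp
  ext n
  rcases n with _ | m
  · rw [PowerSeries.coeff_zero_X_mul, PowerSeries.coeff_mk, if_pos rfl]
  · rw [PowerSeries.coeff_succ_X_mul, coeff_expComp_expComp hH, PowerSeries.coeff_mk,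
      if_neg (Nat.succ_ne_zero m)]
    rcases m with _ | m'
    · rw [Finset.sum_range_one, pow_zero, PowerSeries.coeff_zero_eq_constantCoeff, map_one]
      have hb : bell 0 = 1 := rfl
      rw [hb, h1]
      norm_num
    · have hm : 0 < m' + 1 := Nat.succ_pos _
      have hrec' := hrec (m' + 2) (by omega)
      simp only [show m' + 2 - 1 = m' + 1 from rfl] at hrec'
      rw [Finset.sum_range_succ' _ (m' + 1)]
      have f0 : (bell 0 : ℚ) / ((Nat.factorial 0 : ℕ) : ℚ)
          * PowerSeries.coeff (m' + 1)
            ((PowerSeries.mk fun m => if m = 0 then 0 else h m / (m.factorial : ℚ)) ^ 0) = 0 := by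
        rw [pow_zero, PowerSeries.coeff_one, if_neg (Nat.succ_ne_zero _), mul_zero]
      rw [f0, add_zero]
      have e2 : ∀ i ∈ range (m' + 1),
          (bell (i+1) : ℚ) / (((i+1).factorial : ℕ) : ℚ)
            * PowerSeries.coeff (m' + 1)
              ((PowerSeries.mk fun m => if m = 0 then 0 else h m / (m.factorial : ℚ)) ^ (i+1))
          = ((bell (i+1) : ℚ) / (((i+1).factorial : ℕ) : ℚ)
              * ∑ a ∈ (Finset.Nat.antidiagonalTuple (i+1) (m'+1)).filter (fun a => ∀ j, 0 < a j),
                  (Nat.multinomial Finset.univ a : ℚ) * ∏ j, h (a j))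
              / (((m'+1).factorial : ℕ) : ℚ) := by
        intro i _
        rw [coeff_H_pow h hm (i+1), mul_div_assoc]
      rw [Finset.sum_congr rfl e2, ← Finset.sum_div]
      have hIcc : ∑ k ∈ Finset.Icc 1 (m' + 1),
          ((bell k : ℚ) / (k.factorial : ℚ)) *
            ∑ a ∈ (Finset.Nat.antidiagonalTuple k (m'+1)).filter (fun a => ∀ j, 0 < a j),
              (Nat.multinomial Finset.univ a : ℚ) * ∏ j, h (a j)
          = ∑ i ∈ range (m' + 1),
            ((bell (i+1) : ℚ) / (((i+1).factorial : ℕ) : ℚ)) *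
              ∑ a ∈ (Finset.Nat.antidiagonalTuple (i+1) (m'+1)).filter (fun a => ∀ j, 0 < a j),
                (Nat.multinomial Finset.univ a : ℚ) * ∏ j, h (a j) := by
        rw [← Finset.Ico_add_one_right_eq_Icc, Finset.sum_Ico_eq_sum_range]
        refine Finset.sum_congr (by norm_num) (fun i _ => by rw [Nat.add_comm 1 i])
      rw [← hIcc, hrec']
      have hfac : (((m'+2).factorial : ℕ) : ℚ) = ((m'+2 : ℕ) : ℚ) * (((m'+1).factorial : ℕ) : ℚ) := by
        exact_mod_cast congrArg (Nat.cast : ℕ → ℚ) (Nat.factorial_succ (m'+1))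
      rw [hfac, mul_div_mul_left]
      exact_mod_cast Nat.succ_ne_zero (m'+1)
end
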